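/- Let ν be a valuation on K, μ a valuation of K[x] extending ν with β₁ = μ(x), and suppose there exists h ∈ K[x] with ν₁(h) < μ(h) (ν₁ the monomial valuation). Then in_μ(x) is integral over the graded ring G_ν. -/

import Mathlib

open Polynomial Finset

private lemma aux_inf_le_sum {K : Type*} [Field K] {Γ : Type*}
    [AddCommGroup Γ] [LinearOrder Γ] [IsOrderedAddMonoid Γ]
    (μ : Polynomial K → WithTop Γ)
    (hμ0 : ∀ f, μ f = ⊤ ↔ f = 0)
    (hμa : ∀ f g, min (μ f) (μ g) ≤ μ (f + g))
    (s : Finset ℕ) (g : ℕ → Polynomial K) :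
    (s.inf fun i => μ (g i)) ≤ μ (∑ i ∈ s, g i) := by
  classical
  induction s using Finset.cons_induction with
  | empty => simp [(hμ0 0).mpr rfl]
  | cons a s ha ih =>
      rw [Finset.sum_cons, Finset.inf_cons]
      exact le_trans (min_le_min le_rfl ih) (hμa _ _)

/-- If there exists `h ∈ K[x]` with `ν₁(h) < μ(h)`, then `in_μ(x)` is integral
over the graded ring `G_ν`: there is a monic homogeneous relation, encoded by
the existence of `n ≥ 1` and constants `dᵢ` with `ν(dᵢ) + i·β₁ ≥ n·β₁` such
that `μ(xⁿ + Σ_{i<n} dᵢ xⁱ) > n·β₁`. -/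
theorem stmt4 {K : Type*} [Field K] {Γ : Type*} [AddCommGroup Γ] [LinearOrder Γ] [IsOrderedAddMonoid Γ]
    (ν : K → WithTop Γ) (μ : Polynomial K → WithTop Γ) (β₁ : Γ)
    (hν0 : ∀ a, ν a = ⊤ ↔ a = 0)
    (hνm : ∀ a b, ν (a * b) = ν a + ν b)
    (hνa : ∀ a b, min (ν a) (ν b) ≤ ν (a + b))
    (hμ0 : ∀ f, μ f = ⊤ ↔ f = 0)
    (hμm : ∀ f g, μ (f * g) = μ f + μ g)
    (hμa : ∀ f g, min (μ f) (μ g) ≤ μ (f + g))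
    (hext : ∀ a : K, μ (C a) = ν a)
    (hβ : μ X = (β₁ : WithTop Γ))
    (hex : ∃ h : Polynomial K,
      (range (h.natDegree + 1)).inf
        (fun i => ν (h.coeff i) + ((i • β₁ : Γ) : WithTop Γ)) < μ h) :
    ∃ n : ℕ, 1 ≤ n ∧ ∃ d : ℕ → K,
      (∀ i < n, ((n • β₁ : Γ) : WithTop Γ) ≤ ν (d i) + ((i • β₁ : Γ) : WithTop Γ)) ∧
      ((n • β₁ : Γ) : WithTop Γ) < μ (X ^ n + ∑ i ∈ range n, C (d i) * X ^ i) := by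
  classical
  -- basic facts
  have hν1 : ν 1 = 0 := by
    have hne : ν 1 ≠ ⊤ := fun ht => one_ne_zero ((hν0 1).mp ht)
    have h11 : ν 1 = ν 1 + ν 1 := by rw [← hνm 1 1, one_mul]
    lift ν 1 to Γ using hne with a ha
    rw [← WithTop.coe_add, WithTop.coe_eq_coe] at h11
    have h3 : a = 0 := left_eq_add.mp h11
    exact_mod_cast congrArg (fun x : Γ => (x : WithTop Γ)) h3
  have hνneg : ν (-1) = 0 := by
    have hne : ν (-1) ≠ ⊤ := fun ht => by
      simpa using (hν0 (-1)).mp ht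
    have h11 : (0 : WithTop Γ) = ν (-1) + ν (-1) := by
      rw [← hνm (-1) (-1), neg_mul_neg, one_mul, hν1]
    lift ν (-1) to Γ using hne with a ha
    rw [← WithTop.coe_add] at h11
    have h2 : a + a = 0 := by exact_mod_cast h11.symm
    have h3 : a = 0 := by
      rcases lt_trichotomy a 0 with hlt | heq | hgt
      · exact absurd h2 (ne_of_lt (by simpa using add_lt_add hlt hlt))
      · exact heq
      · exact absurd h2 (ne_of_gt (by simpa using add_lt_add hgt hgt))
    exact_mod_cast congrArg (fun x : Γ => (x : WithTop Γ)) h3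
  have hμneg : ∀ f, μ (-f) = μ f := by
    intro f
    have : -f = C (-1) * f := by simp
    rw [this, hμm, hext, hνneg, zero_add]
  have hμtop : μ 0 = ⊤ := (hμ0 0).mpr rfl
  have hμpow : ∀ i : ℕ, μ (X ^ i) = ((i • β₁ : Γ) : WithTop Γ) := by
    intro i
    induction i with
    | zero =>
        simp only [pow_zero, zero_smul]
        rw [← Polynomial.C_1, hext, hν1]
        rfl
    | succ k ih =>
        rw [pow_succ, hμm, ih, hβ, succ_nsmul, WithTop.coe_add]
  have hμmon : ∀ (i : ℕ) (a : K),
      μ ((monomial i) a) = ν a + ((i • β₁ : Γ) : WithTop Γ) := by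
    intro i a
    rw [← C_mul_X_pow_eq_monomial, hμm, hext, hμpow]
  -- set up
  obtain ⟨h, hh⟩ := hex
  set N := h.natDegree with hN
  set f : ℕ → WithTop Γ :=
    fun i => ν (h.coeff i) + ((i • β₁ : Γ) : WithTop Γ) with hf
  set m := (range (N + 1)).inf f with hm
  have hmtop : m < ⊤ := lt_of_lt_of_le hh le_top
  -- the largest index achieving the infimum
  set T := (range (N + 1)).filter (fun i => f i = m) with hT
  have hTne : T.Nonempty := by
    obtain ⟨i, hi, hieq⟩ :=
      Finset.exists_mem_eq_inf (range (N + 1)) ⟨0, by simp⟩ f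
    exact ⟨i, Finset.mem_filter.mpr ⟨hi, hieq.symm⟩⟩
  set n := T.max' hTne with hn
  have hnT : n ∈ T := Finset.max'_mem _ _
  have hnmem : n ∈ range (N + 1) := (Finset.mem_filter.mp hnT).1
  have hfn : f n = m := (Finset.mem_filter.mp hnT).2
  have hnN : n ≤ N := Nat.lt_succ_iff.mp (Finset.mem_range.mp hnmem)
  have hgt : ∀ i ∈ range (N + 1), n < i → m < f i := by
    intro i hi hni
    refine lt_of_le_of_ne (Finset.inf_le hi) fun heq => ?_
    have : i ∈ T := Finset.mem_filter.mpr ⟨hi, heq.symm⟩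
    exact absurd (Finset.le_max' T i this) (not_le.mpr hni)
  -- the pivot coefficient
  have hνcn : ν (h.coeff n) ≠ ⊤ := by
    intro ht
    have hfn' : f n = m := hfn
    rw [hf] at hfn'
    simp only [ht, top_add] at hfn'
    exact ne_top_of_lt hmtop hfn'.symm
  have hcn : h.coeff n ≠ 0 := fun hc => hνcn (by rw [hc]; exact (hν0 0).mpr rfl)
  -- split h
  set h₁ := ∑ i ∈ range (n + 1), (monomial i) (h.coeff i) with hh₁
  set Q := ∑ i ∈ Ico (n + 1) (N + 1), (monomial i) (h.coeff i) with hQ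
  have hsplit : h₁ + Q = h := by
    rw [hh₁, hQ, Finset.sum_range_add_sum_Ico _ (Nat.succ_le_succ hnN)]
    exact (h.as_sum_range' (N + 1) (Nat.lt_succ_self N)).symm
  -- μ Q > m
  have hμQ : m < μ Q := by
    refine lt_of_lt_of_le ?_ (aux_inf_le_sum μ hμ0 hμa _ _)
    rw [Finset.lt_inf_iff hmtop]
    intro i hi
    rw [hμmon]
    have hi' : i ∈ range (N + 1) := by
      rw [Finset.mem_range]; exact (Finset.mem_Ico.mp hi).2
    exact hgt i hi' (Nat.lt_of_succ_le (Finset.mem_Ico.mp hi).1)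
  -- μ h₁ > m
  have hμh₁ : m < μ h₁ := by
    have : h₁ = h + -Q := by rw [← hsplit]; ring
    rw [this]
    refine lt_of_lt_of_le ?_ (hμa h (-Q))
    rw [lt_min_iff, hμneg]
    exact ⟨hh, hμQ⟩
  -- n ≥ 1
  have hn1 : 1 ≤ n := by
    by_contra hc
    have hn0 : n = 0 := by omega
    have : μ h₁ = m := by
      rw [hh₁, hn0, Finset.sum_range_one, hμmon, ← hfn, hn0, hf]
    exact absurd this (ne_of_gt hμh₁)
  -- the candidate polynomial
  set d : ℕ → K := fun i => h.coeff i / h.coeff n with hd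
  set P : Polynomial K := X ^ n + ∑ i ∈ range n, C (d i) * X ^ i with hP
  have hCP : C (h.coeff n) * P = h₁ := by
    rw [hP, mul_add, Finset.mul_sum, hh₁, Finset.sum_range_succ]
    rw [add_comm]
    congr 1
    · refine Finset.sum_congr rfl fun i _ => ?_
      rw [← mul_assoc, ← C_mul, hd]
      rw [mul_comm (h.coeff n), div_mul_cancel₀ _ hcn, C_mul_X_pow_eq_monomial]
    · rw [C_mul_X_pow_eq_monomial]
  have hfneq : ν (h.coeff n) + ((n • β₁ : Γ) : WithTop Γ) = m := hfn
  have hμP : ((n • β₁ : Γ) : WithTop Γ) < μ P := by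
    have key : ν (h.coeff n) + ((n • β₁ : Γ) : WithTop Γ)
        < ν (h.coeff n) + μ P := by
      rw [hfneq, ← hext, ← hμm, hCP]; exact hμh₁
    exact (WithTop.add_lt_add_iff_left hνcn).mp key
  refine ⟨n, hn1, d, fun i hi => ?_, hμP⟩
  by_cases hci : h.coeff i = 0
  · have : d i = 0 := by rw [hd]; simp [hci]
    rw [this, (hν0 0).mpr rfl, top_add]
    exact le_top
  · have heqc : d i * h.coeff n = h.coeff i := div_mul_cancel₀ _ hcn
    have hfi : m ≤ f i := Finset.inf_le (Finset.mem_range.mpr (by omega))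
    have : (((n • β₁ : Γ) : WithTop Γ)) + ν (h.coeff n)
        ≤ (ν (d i) + ((i • β₁ : Γ) : WithTop Γ)) + ν (h.coeff n) := by
      calc ((n • β₁ : Γ) : WithTop Γ) + ν (h.coeff n)
          = m := by rw [← hfneq, add_comm]
        _ ≤ f i := hfi
        _ = ν (d i) + ν (h.coeff n) + ((i • β₁ : Γ) : WithTop Γ) := by
            rw [hf, ← hνm, heqc]
        _ = ν (d i) + ((i • β₁ : Γ) : WithTop Γ) + ν (h.coeff n) :=
            add_right_comm _ _ _
    exact (WithTop.add_le_add_iff_right hνcn).mp this
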